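/- Let 0 < α < n, 1 < q ≤ p < ∞, 1 < t ≤ s < ∞ with 1/s = 1/p − α/n and t/s = q/p, let ε ∈ E and f ∈ M^p_q. Then one has the pointwise estimate Σ_{j=−∞}^{∞} | Σ_{Q∈𝒟_j} |Q|^{α/n} ⟨f,h^ε_Q⟩ h^ε_Q(x) | ≤ C ‖f‖_{M^p_q}^{1−p/s} · ( sup_{l∈ℤ} | Σ_{Q∈𝒟_l} ⟨f,h^ε_Q⟩ h^ε_Q(x) | )^{p/s} for every x ∈ ℝⁿ, with C depending only on n, p, q, s, t, α. -/

import Mathlib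

open MeasureTheory Filter Topology ENNReal NNReal

noncomputable section

/-- The dyadic cube `Q_{j,m} = ∏_{i} [mᵢ/2ʲ, (mᵢ+1)/2ʲ)` in `ℝⁿ`. -/
def dyadicCube (n : ℕ) (j : ℤ) (m : Fin n → ℤ) : Set (Fin n → ℝ) :=
  {x | ∀ i, (m i : ℝ) / 2 ^ j ≤ x i ∧ x i < ((m i : ℝ) + 1) / 2 ^ j}

/-- The one-dimensional generating Haar pattern
`h^{εᵢ}(t) = χ_{[0,1)}(2t) + (−1)^{εᵢ} χ_{[1,2)}(2t)`. -/
def haarBase1 (e : ZMod 2) (t : ℝ) : ℝ :=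
  Set.indicator (Set.Ico (0 : ℝ) 1) (fun _ => (1 : ℝ)) (2 * t)
    + (-1 : ℝ) ^ e.val * Set.indicator (Set.Ico (1 : ℝ) 2) (fun _ => (1 : ℝ)) (2 * t)

/-- `h^ε = h^{ε₁} ⊗ ⋯ ⊗ h^{εₙ}`. -/
def haarBase {n : ℕ} (ε : Fin n → ZMod 2) (x : Fin n → ℝ) : ℝ :=
  ∏ i, haarBase1 (ε i) (x i)

/-- The Haar function `h^ε_Q(x) = 2^{jn/2} h^ε(2ʲx − m)` adapted to `Q_{j,m}`. -/
def haarFn {n : ℕ} (ε : Fin n → ZMod 2) (j : ℤ) (m : Fin n → ℤ) (x : Fin n → ℝ) : ℝ :=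
  (2 : ℝ) ^ (((j : ℝ) * (n : ℝ)) / 2) * haarBase ε (fun i => (2 : ℝ) ^ j * x i - (m i : ℝ))

/-- The set `E = (ℤ/2ℤ)ⁿ \ {0}` of nontrivial sign patterns. -/
def haarSigns (n : ℕ) : Finset (Fin n → ZMod 2) :=
  Finset.univ.erase 0

/-- The Haar coefficient `⟨f, h^ε_Q⟩ = ∫ f h^ε_Q`. -/
def haarCoeff {n : ℕ} (f : (Fin n → ℝ) → ℝ) (ε : Fin n → ZMod 2) (j : ℤ) (m : Fin n → ℤ) : ℝ :=
  ∫ x, f x * haarFn ε j m x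

/-- `Σ_{Q ∈ 𝒟_j} ⟨f,h^ε_Q⟩ h^ε_Q(x)`. -/
def haarLayer {n : ℕ} (f : (Fin n → ℝ) → ℝ) (ε : Fin n → ZMod 2) (j : ℤ) (x : Fin n → ℝ) : ℝ :=
  ∑' m : Fin n → ℤ, haarCoeff f ε j m * haarFn ε j m x

/-- The Haar square function `( Σ_j | Σ_{Q ∈ 𝒟_j} ⟨f,h^ε_Q⟩ h^ε_Q |² )^{1/2}`. -/
def haarSquareFn {n : ℕ} (f : (Fin n → ℝ) → ℝ) (ε : Fin n → ZMod 2) (x : Fin n → ℝ) : ℝ :=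
  Real.sqrt (∑' j : ℤ, (haarLayer f ε j x) ^ 2)

/-- The (dyadic) Morrey norm `‖f‖_{M^p_q} = sup_{Q ∈ 𝒟} |Q|^{1/p−1/q} (∫_Q |f|^q)^{1/q}`. -/
def morreyNorm {n : ℕ} (p q : ℝ) (f : (Fin n → ℝ) → ℝ) : ℝ≥0∞ :=
  ⨆ (j : ℤ) (m : Fin n → ℤ),
    volume (dyadicCube n j m) ^ (1 / p - 1 / q) *
      (∫⁻ x in dyadicCube n j m, ((‖f x‖₊ : ℝ≥0∞)) ^ q) ^ (1 / q)

/-- Membership in the Morrey space `M^p_q`. -/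
def MemMorrey {n : ℕ} (p q : ℝ) (f : (Fin n → ℝ) → ℝ) : Prop :=
  AEStronglyMeasurable f volume ∧ morreyNorm p q f ≠ ⊤

/-- The average `m_Q(f) = |Q|⁻¹ ∫_Q f` over the dyadic cube `Q_{j,m}`. -/
def cubeAvg {n : ℕ} (j : ℤ) (m : Fin n → ℤ) (f : (Fin n → ℝ) → ℝ) : ℝ :=
  (volume (dyadicCube n j m)).toReal⁻¹ * ∫ x in dyadicCube n j m, f x

/-- The dyadic BMO norm `sup_{Q ∈ 𝒟} m_Q(|a − m_Q(a)|)`. -/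
def bmoNormD {n : ℕ} (a : (Fin n → ℝ) → ℝ) : ℝ≥0∞ :=
  ⨆ (j : ℤ) (m : Fin n → ℤ),
    ENNReal.ofReal (cubeAvg j m (fun x => |a x - cubeAvg j m a|))

/-- `Σ_{Q ∈ 𝒟_j} |Q|^{α/n} ⟨f,h^ε_Q⟩ h^ε_Q(x)`. -/
def weightedLayer {n : ℕ} (α : ℝ) (f : (Fin n → ℝ) → ℝ) (ε : Fin n → ZMod 2) (j : ℤ)
    (x : Fin n → ℝ) : ℝ :=
  ∑' m : Fin n → ℤ,
    (volume (dyadicCube n j m)).toReal ^ (α / (n : ℝ)) * (haarCoeff f ε j m * haarFn ε j m x)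

/-- The symmetric partial sum `Σ_{ε∈E} Σ_{j=−M}^{M} Σ_{Q∈𝒟_j} |Q|^{α/n} ⟨f,h^ε_Q⟩ h^ε_Q(x)`. -/
def dyadicIalphaPartial {n : ℕ} (α : ℝ) (f : (Fin n → ℝ) → ℝ) (M : ℕ) (x : Fin n → ℝ) : ℝ :=
  ∑ ε ∈ haarSigns n, ∑ j ∈ Finset.Icc (-(M : ℤ)) (M : ℤ), weightedLayer α f ε j x

/-- The dyadic fractional integral operator `I_{α,dyadic}`, as the limit of `dyadicIalphaPartial`. -/
def dyadicIalpha {n : ℕ} (α : ℝ) (f : (Fin n → ℝ) → ℝ) (x : Fin n → ℝ) : ℝ :=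
  limUnder atTop (fun M : ℕ => dyadicIalphaPartial α f M x)

/-- The commutator `[a, I_{α,dyadic}]f = a · I_{α,dyadic}f − I_{α,dyadic}(a f)`. -/
def dyadicComm {n : ℕ} (α : ℝ) (a f : (Fin n → ℝ) → ℝ) (x : Fin n → ℝ) : ℝ :=
  a x * dyadicIalpha α f x - dyadicIalpha α (fun y => a y * f y) x

/-- Symmetric partial sums of the Haar expansion of `f`. -/
def haarPartial {n : ℕ} (f : (Fin n → ℝ) → ℝ) (M : ℕ) (x : Fin n → ℝ) : ℝ :=
  ∑ ε ∈ haarSigns n, ∑ j ∈ Finset.Icc (-(M : ℤ)) (M : ℤ), haarLayer f ε j x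

/-- Convergence in `L^q` on every compact subset of `ℝⁿ`. -/
def TendstoLqLoc {n : ℕ} (q : ℝ) (F : ℕ → (Fin n → ℝ) → ℝ) (g : (Fin n → ℝ) → ℝ) : Prop :=
  ∀ K : Set (Fin n → ℝ), IsCompact K →
    Tendsto (fun M => eLpNorm (fun x => F M x - g x) (ENNReal.ofReal q) (volume.restrict K))
      atTop (𝓝 0)

/-- The dyadic paraproduct `Σ_j Σ_{Q∈𝒟_j} ⟨f,χ_Q⟩ ⟨a,h^ε_Q⟩ h^ε_Q(x)/|Q|`. -/
def paraproduct {n : ℕ} (a f : (Fin n → ℝ) → ℝ) (ε : Fin n → ZMod 2) (x : Fin n → ℝ) : ℝ :=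
  ∑' (j : ℤ) (m : Fin n → ℤ),
    (∫ y in dyadicCube n j m, f y) * haarCoeff a ε j m * haarFn ε j m x
      / (volume (dyadicCube n j m)).toReal

/-- A `(p,q)`-block: an `L^q` function supported on a dyadic cube `Q` with
`‖A‖_{L^q} ≤ |Q|^{1/q−1/p}`. -/
def IsBlock {n : ℕ} (p q : ℝ) (A : (Fin n → ℝ) → ℝ) : Prop :=
  MemLp A (ENNReal.ofReal q) volume ∧
    ∃ (j : ℤ) (m : Fin n → ℤ), (∀ x ∉ dyadicCube n j m, A x = 0) ∧
      eLpNorm A (ENNReal.ofReal q) volume ≤ volume (dyadicCube n j m) ^ (1 / q - 1 / p)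

/-- The block space (predual Morrey) norm `‖f‖_{H^p_q}`: infimum of `Σ|λⱼ|` over decompositions
`f = Σ λⱼ aⱼ` into `(p,q)`-blocks. It equals `⊤` iff no decomposition exists. -/
def blockNorm {n : ℕ} (p q : ℝ) (f : (Fin n → ℝ) → ℝ) : ℝ≥0∞ :=
  ⨅ d : {d : (ℕ → ℝ) × (ℕ → (Fin n → ℝ) → ℝ) //
      (∀ i, IsBlock p q (d.2 i)) ∧ Summable (fun i => |d.1 i|) ∧
        ∀ᵐ x ∂volume, f x = ∑' i, d.1 i * d.2 i x},
    ENNReal.ofReal (∑' i, |(d : (ℕ → ℝ) × (ℕ → (Fin n → ℝ) → ℝ)).1 i|)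

/-- Membership in the span of Haar functions. -/
def InHaarSpan {n : ℕ} (b : (Fin n → ℝ) → ℝ) : Prop :=
  ∃ (s : Finset ((Fin n → ZMod 2) × ℤ × (Fin n → ℤ)))
    (c : (Fin n → ZMod 2) × ℤ × (Fin n → ℤ) → ℝ),
      (∀ u ∈ s, u.1 ≠ 0) ∧ ∀ x, b x = ∑ u ∈ s, c u * haarFn u.1 u.2.1 u.2.2 x

/-- `VMO_dyadic`: the closure in the dyadic BMO norm of the span of Haar functions. -/
def InVMOD {n : ℕ} (a : (Fin n → ℝ) → ℝ) : Prop :=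
  ∀ δ : ℝ, 0 < δ → ∃ b : (Fin n → ℝ) → ℝ, InHaarSpan b ∧
    bmoNormD (fun x => a x - b x) ≤ ENNReal.ofReal δ

/-- Euclidean distance on `Fin n → ℝ`. -/
def eucDist {n : ℕ} (x y : Fin n → ℝ) : ℝ :=
  Real.sqrt (∑ i, (x i - y i) ^ 2)

/-- The Riesz fractional integral `I_α f(x) = ∫ f(y)/|x−y|^{n−α} dy`. -/
def rieszPotential {n : ℕ} (α : ℝ) (f : (Fin n → ℝ) → ℝ) (x : Fin n → ℝ) : ℝ :=
  ∫ y, f y / eucDist x y ^ ((n : ℝ) - α)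

/-- A (half-open) cube in `ℝⁿ` with corner `c` and side length `l`. -/
def genCube {n : ℕ} (c : Fin n → ℝ) (l : ℝ) : Set (Fin n → ℝ) :=
  {x | ∀ i, c i ≤ x i ∧ x i < c i + l}

/-- Average over a general cube. -/
def genAvg {n : ℕ} (c : Fin n → ℝ) (l : ℝ) (f : (Fin n → ℝ) → ℝ) : ℝ :=
  (volume (genCube c l)).toReal⁻¹ * ∫ x in genCube c l, f x

/-- The (non-dyadic) BMO norm: supremum over all cubes of `m_Q(|a − m_Q(a)|)`. -/
def bmoNormFull {n : ℕ} (a : (Fin n → ℝ) → ℝ) : ℝ≥0∞ :=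
  ⨆ (c : Fin n → ℝ) (l : ℝ) (_ : 0 < l),
    ENNReal.ofReal (genAvg c l (fun x => |a x - genAvg c l a|))


/-- The truncated Haar square function `( Σ_{j≥k} | Σ_{Q∈𝒟_j} ⟨f,h^ε_Q⟩ h^ε_Q |² )^{1/2}`. -/
def haarSquareFnFrom {n : ℕ} (k : ℤ) (f : (Fin n → ℝ) → ℝ) (ε : Fin n → ZMod 2)
    (x : Fin n → ℝ) : ℝ :=
  Real.sqrt (∑' j : {j : ℤ // k ≤ j}, (haarLayer f ε j.1 x) ^ 2)

/-- `Σ_{Q ∈ 𝒟_k} ⟨f,χ_Q⟩ χ_Q(x)/|Q|`. -/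
def avgLayer {n : ℕ} (k : ℤ) (f : (Fin n → ℝ) → ℝ) (x : Fin n → ℝ) : ℝ :=
  ∑' m : Fin n → ℤ,
    (∫ y in dyadicCube n k m, f y) * Set.indicator (dyadicCube n k m) (fun _ => (1 : ℝ)) x
      / (volume (dyadicCube n k m)).toReal

/-- `Σ_{Q ∈ 𝒟_j, Q ⊆ R} ⟨f,h^ε_Q⟩ h^ε_Q(x)` where `R = Q_{k,m₀}`. -/
def haarLayerIn {n : ℕ} (f : (Fin n → ℝ) → ℝ) (ε : Fin n → ZMod 2) (k : ℤ) (m₀ : Fin n → ℤ)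
    (j : ℤ) (x : Fin n → ℝ) : ℝ :=
  ∑' m : {m : Fin n → ℤ // dyadicCube n j m ⊆ dyadicCube n k m₀},
    haarCoeff f ε j m.1 * haarFn ε j m.1 x

/-- The localized square function
`( Σ_{j ≥ −log₂ℓ(R)} | Σ_{Q∈𝒟_j, Q⊆R} ⟨f,h^ε_Q⟩ h^ε_Q |² )^{1/2}` for `R = Q_{k,m₀}`. -/
def haarSquareFnIn {n : ℕ} (f : (Fin n → ℝ) → ℝ) (ε : Fin n → ZMod 2) (k : ℤ) (m₀ : Fin n → ℤ)
    (x : Fin n → ℝ) : ℝ :=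
  Real.sqrt (∑' j : {j : ℤ // k ≤ j}, (haarLayerIn f ε k m₀ j.1 x) ^ 2)

/-- The square function `( Σ_j | Σ_{Q∈𝒟_j, Q ⊇ R} ⟨f,h^ε_Q⟩ h^ε_Q |² )^{1/2}` over cubes
containing `R = Q_{k,m₀}`. -/
def haarSquareFnUp {n : ℕ} (f : (Fin n → ℝ) → ℝ) (ε : Fin n → ZMod 2) (k : ℤ) (m₀ : Fin n → ℤ)
    (x : Fin n → ℝ) : ℝ :=
  Real.sqrt (∑' j : ℤ,
    (∑' m : {m : Fin n → ℤ // dyadicCube n k m₀ ⊆ dyadicCube n j m},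
      haarCoeff f ε j m.1 * haarFn ε j m.1 x) ^ 2)
section Aux0

lemma dyadicCube_eq_pi (n : ℕ) (j : ℤ) (m : Fin n → ℤ) :
    dyadicCube n j m =
      Set.pi Set.univ (fun i => Set.Ico ((m i : ℝ) / 2 ^ j) (((m i : ℝ) + 1) / 2 ^ j)) := by
  ext x; simp [dyadicCube, Set.mem_pi, Set.mem_Ico]

lemma measurableSet_dyadicCube (n : ℕ) (j : ℤ) (m : Fin n → ℤ) :
    MeasurableSet (dyadicCube n j m) := by
  rw [dyadicCube_eq_pi]
  exact MeasurableSet.univ_pi (fun i => measurableSet_Ico)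

end Aux0
section Aux

variable {n : ℕ}

lemma abs_haarBase1_le (e : ZMod 2) (t : ℝ) : |haarBase1 e t| ≤ 1 := by
  unfold haarBase1
  have he : |(-1 : ℝ) ^ e.val| = 1 := by
    rw [abs_pow, abs_neg, abs_one, one_pow]
  by_cases h1 : (2*t) ∈ Set.Ico (0:ℝ) 1
  · have h2 : (2*t) ∉ Set.Ico (1:ℝ) 2 := by
      intro h2; exact absurd h1.2 (not_lt.2 h2.1)
    simp [Set.indicator_of_mem h1, Set.indicator_of_notMem h2]
  · by_cases h2 : (2*t) ∈ Set.Ico (1:ℝ) 2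
    · simp [Set.indicator_of_notMem h1, Set.indicator_of_mem h2, he]
    · simp [Set.indicator_of_notMem h1, Set.indicator_of_notMem h2]

lemma haarBase1_ne_zero {e : ZMod 2} {t : ℝ} (h : haarBase1 e t ≠ 0) : 0 ≤ t ∧ t < 1 := by
  by_contra hc
  apply h
  have h1 : (2*t) ∉ Set.Ico (0:ℝ) 1 ∨ (2*t) ∉ Set.Ico (1:ℝ) 2 := by
    by_cases h1 : (2*t) ∈ Set.Ico (0:ℝ) 1
    · right; intro h2; exact absurd h1.2 (not_lt.2 h2.1)
    · left; exact h1
  have hout : (2*t) ∉ Set.Ico (0:ℝ) 1 ∧ (2*t) ∉ Set.Ico (1:ℝ) 2 := by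
    push_neg at hc
    constructor
    · rintro ⟨ha, hb⟩
      rcases lt_or_ge t 0 with h|h
      · linarith
      · have := hc h; linarith
    · rintro ⟨ha, hb⟩
      rcases lt_or_ge t 0 with h|h
      · linarith
      · have := hc h; linarith
  unfold haarBase1
  simp [Set.indicator_of_notMem hout.1, Set.indicator_of_notMem hout.2]

lemma abs_haarBase_le (ε : Fin n → ZMod 2) (x : Fin n → ℝ) : |haarBase ε x| ≤ 1 := by
  unfold haarBase
  rw [Finset.abs_prod]
  exact Finset.prod_le_one (fun i _ => abs_nonneg _) (fun i _ => abs_haarBase1_le _ _)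

lemma mem_of_haarFn_ne_zero {ε : Fin n → ZMod 2} {j : ℤ} {m : Fin n → ℤ} {x : Fin n → ℝ}
    (h : haarFn ε j m x ≠ 0) : x ∈ dyadicCube n j m := by
  have h2 : haarBase ε (fun i => (2:ℝ) ^ j * x i - (m i : ℝ)) ≠ 0 := by
    intro h0; apply h; unfold haarFn; rw [h0, mul_zero]
  unfold haarBase at h2
  rw [Finset.prod_ne_zero_iff] at h2
  intro i
  have hi := haarBase1_ne_zero (h2 i (Finset.mem_univ i))
  have hpow : (0:ℝ) < 2 ^ j := zpow_pos (by norm_num) j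
  constructor
  · rw [div_le_iff₀ hpow]
    have := mul_comm ((2:ℝ)^j) (x i)
    simp only at hi
    linarith [hi.1]
  · rw [lt_div_iff₀ hpow]
    have := mul_comm ((2:ℝ)^j) (x i)
    simp only at hi
    linarith [hi.2]

lemma abs_haarFn_le (ε : Fin n → ZMod 2) (j : ℤ) (m : Fin n → ℤ) (x : Fin n → ℝ) :
    |haarFn ε j m x| ≤ (2:ℝ) ^ (((j:ℝ) * n) / 2) := by
  unfold haarFn
  rw [abs_mul]
  have h1 : |(2:ℝ) ^ (((j:ℝ) * n) / 2)| = (2:ℝ) ^ (((j:ℝ) * n) / 2) :=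
    abs_of_pos (Real.rpow_pos_of_pos (by norm_num) _)
  calc |(2:ℝ) ^ (((j:ℝ) * n) / 2)| * |haarBase ε _|
      ≤ |(2:ℝ) ^ (((j:ℝ) * n) / 2)| * 1 :=
        mul_le_mul_of_nonneg_left (abs_haarBase_le _ _) (abs_nonneg _)
    _ = (2:ℝ) ^ (((j:ℝ) * n) / 2) := by rw [mul_one, h1]

lemma floor_eq_of_mem {j : ℤ} {m : Fin n → ℤ} {x : Fin n → ℝ}
    (h : x ∈ dyadicCube n j m) (i : Fin n) : m i = ⌊(2:ℝ) ^ j * x i⌋ := by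
  have hpow : (0:ℝ) < 2 ^ j := zpow_pos (by norm_num) j
  obtain ⟨h1, h2⟩ := h i
  rw [div_le_iff₀ hpow] at h1
  rw [lt_div_iff₀ hpow] at h2
  symm
  rw [Int.floor_eq_iff]
  have := mul_comm ((2:ℝ)^j) (x i)
  constructor
  · nlinarith
  · nlinarith

lemma volume_dyadicCube (j : ℤ) (m : Fin n → ℤ) :
    MeasureTheory.volume (dyadicCube n j m) = ENNReal.ofReal ((2:ℝ) ^ (-(j:ℝ) * n)) := by
  rw [dyadicCube_eq_pi, MeasureTheory.volume_pi_pi]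
  have hlen : ∀ i : Fin n, MeasureTheory.volume (Set.Ico ((m i : ℝ) / 2 ^ j) (((m i : ℝ) + 1) / 2 ^ j))
      = ENNReal.ofReal ((2:ℝ) ^ (-(j:ℝ))) := by
    intro i
    rw [Real.volume_Ico]
    congr 1
    have hpow : (0:ℝ) < 2 ^ j := zpow_pos (by norm_num) j
    rw [div_sub_div_same]
    rw [show ((m i : ℝ) + 1 - m i) = 1 by ring]
    rw [Real.rpow_neg (by norm_num), ← Real.rpow_intCast 2 j]
    rw [one_div]
  simp only [hlen]
  rw [Finset.prod_const, ← ENNReal.ofReal_pow (Real.rpow_nonneg (by norm_num) _)]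
  congr 1
  simp only [Finset.card_univ, Fintype.card_fin]
  rw [← Real.rpow_natCast ((2:ℝ) ^ (-(j:ℝ))) n, ← Real.rpow_mul (by norm_num)]

end Aux
section Aux2

open MeasureTheory

variable {n : ℕ}

lemma haarLayer_eq_single (f : (Fin n → ℝ) → ℝ) (ε : Fin n → ZMod 2) (j : ℤ) (x : Fin n → ℝ) :
    haarLayer f ε j x = haarCoeff f ε j (fun i => ⌊(2:ℝ) ^ j * x i⌋) *
      haarFn ε j (fun i => ⌊(2:ℝ) ^ j * x i⌋) x := by
  unfold haarLayer
  apply tsum_eq_single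
  intro m hm
  rcases eq_or_ne (haarFn ε j m x) 0 with h|h
  · rw [h, mul_zero]
  · exact absurd (funext fun i => floor_eq_of_mem (mem_of_haarFn_ne_zero h) i) hm

lemma haarCoeff_abs_le (f : (Fin n → ℝ) → ℝ) (ε : Fin n → ZMod 2) (j : ℤ) (m : Fin n → ℤ) :
    ENNReal.ofReal |haarCoeff f ε j m| ≤
      ENNReal.ofReal ((2:ℝ) ^ (((j:ℝ) * n) / 2)) *
        ∫⁻ y in dyadicCube n j m, (‖f y‖₊ : ℝ≥0∞) := by
  have h1 : |haarCoeff f ε j m| ≤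
      (∫⁻ y, ENNReal.ofReal ‖f y * haarFn ε j m y‖).toReal := by
    rw [show |haarCoeff f ε j m| = ‖haarCoeff f ε j m‖ from (Real.norm_eq_abs _).symm]
    exact norm_integral_le_lintegral_norm _
  calc ENNReal.ofReal |haarCoeff f ε j m|
      ≤ ∫⁻ y, ENNReal.ofReal ‖f y * haarFn ε j m y‖ :=
        le_trans (ENNReal.ofReal_le_ofReal h1) ENNReal.ofReal_toReal_le
    _ ≤ ∫⁻ y, (dyadicCube n j m).indicator
          (fun y => ENNReal.ofReal ((2:ℝ) ^ (((j:ℝ) * n) / 2)) * (‖f y‖₊ : ℝ≥0∞)) y := by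
        apply lintegral_mono
        intro y
        dsimp only
        rcases eq_or_ne (haarFn ε j m y) 0 with h|h
        · simp [h]
        · rw [Set.indicator_of_mem (mem_of_haarFn_ne_zero h)]
          rw [norm_mul, ENNReal.ofReal_mul (norm_nonneg _),
            ofReal_norm (f y), mul_comm]
          apply mul_le_mul_left
          apply ENNReal.ofReal_le_ofReal
          rw [Real.norm_eq_abs]
          exact abs_haarFn_le ε j m y
    _ = ENNReal.ofReal ((2:ℝ) ^ (((j:ℝ) * n) / 2)) *
          ∫⁻ y in dyadicCube n j m, (‖f y‖₊ : ℝ≥0∞) := by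
        rw [lintegral_indicator (measurableSet_dyadicCube n j m) _,
          lintegral_const_mul' _ _ ENNReal.ofReal_ne_top]

lemma holder_cube (f : (Fin n → ℝ) → ℝ) (hf : AEStronglyMeasurable f volume)
    {q : ℝ} (hq : 1 < q) (j : ℤ) (m : Fin n → ℤ) :
    ∫⁻ y in dyadicCube n j m, (‖f y‖₊ : ℝ≥0∞) ≤
      (∫⁻ y in dyadicCube n j m, (‖f y‖₊ : ℝ≥0∞) ^ q) ^ (1/q) *
        (volume (dyadicCube n j m)) ^ (1 - 1/q) := by
  have hpq : q.HolderConjugate (Real.conjExponent q) := Real.HolderConjugate.conjExponent hq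
  have hmeas : AEMeasurable (fun y => (‖f y‖₊ : ℝ≥0∞)) (volume.restrict (dyadicCube n j m)) :=
    (hf.restrict.aemeasurable.nnnorm).coe_nnreal_ennreal
  have := ENNReal.lintegral_mul_le_Lp_mul_Lq (volume.restrict (dyadicCube n j m)) hpq
    hmeas aemeasurable_const (g := fun _ => (1:ℝ≥0∞))
  simp only [Pi.mul_apply, mul_one, ENNReal.one_rpow] at this
  calc ∫⁻ y in dyadicCube n j m, (‖f y‖₊ : ℝ≥0∞)
      ≤ (∫⁻ y in dyadicCube n j m, (‖f y‖₊ : ℝ≥0∞) ^ q) ^ (1/q) *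
        (∫⁻ _ in dyadicCube n j m, (1:ℝ≥0∞)) ^ (1/Real.conjExponent q) := this
    _ = (∫⁻ y in dyadicCube n j m, (‖f y‖₊ : ℝ≥0∞) ^ q) ^ (1/q) *
        (volume (dyadicCube n j m)) ^ (1 - 1/q) := by
        have h3 : (1:ℝ) / q.conjExponent = 1 - 1/q := by
          rw [one_div, one_div]
          linarith [hpq.inv_add_inv_eq_one]
        rw [setLIntegral_one, h3]

end Aux2
section Aux3

open MeasureTheory

variable {n : ℕ}

lemma morrey_cube (f : (Fin n → ℝ) → ℝ) (p q : ℝ) (j : ℤ) (m : Fin n → ℤ) :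
    (∫⁻ y in dyadicCube n j m, (‖f y‖₊ : ℝ≥0∞) ^ q) ^ (1/q) ≤
      (volume (dyadicCube n j m)) ^ (1/q - 1/p) * morreyNorm p q f := by
  set V := volume (dyadicCube n j m) with hVdef
  have hV : V = ENNReal.ofReal ((2:ℝ) ^ (-(j:ℝ) * n)) := volume_dyadicCube j m
  have hv : (0:ℝ) < (2:ℝ) ^ (-(j:ℝ) * n) := Real.rpow_pos_of_pos (by norm_num) _
  have hV0 : V ≠ 0 := by rw [hV]; exact (ENNReal.ofReal_pos.2 hv).ne'
  have hVt : V ≠ ⊤ := by rw [hV]; exact ENNReal.ofReal_ne_top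
  have hle : V ^ (1/p - 1/q) * (∫⁻ y in dyadicCube n j m, (‖f y‖₊ : ℝ≥0∞) ^ q) ^ (1/q)
      ≤ morreyNorm p q f := by
    refine le_trans ?_ (le_iSup _ j)
    exact le_iSup (fun m' => volume (dyadicCube n j m') ^ (1/p - 1/q) *
      (∫⁻ x in dyadicCube n j m', ((‖f x‖₊ : ℝ≥0∞)) ^ q) ^ (1/q)) m
  calc (∫⁻ y in dyadicCube n j m, (‖f y‖₊ : ℝ≥0∞) ^ q) ^ (1/q)
      = V ^ (1/q - 1/p) * (V ^ (1/p - 1/q) *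
        (∫⁻ y in dyadicCube n j m, (‖f y‖₊ : ℝ≥0∞) ^ q) ^ (1/q)) := by
        rw [← mul_assoc, ← ENNReal.rpow_add _ _ hV0 hVt]
        norm_num
    _ ≤ V ^ (1/q - 1/p) * morreyNorm p q f := mul_le_mul_right hle _

lemma layer_abs_le (f : (Fin n → ℝ) → ℝ) (hf : AEStronglyMeasurable f volume)
    {p q : ℝ} (hq : 1 < q) (hqp : q ≤ p) (ε : Fin n → ZMod 2) (j : ℤ) (x : Fin n → ℝ) :
    ENNReal.ofReal |haarLayer f ε j x| ≤
      ENNReal.ofReal ((2:ℝ) ^ ((j:ℝ) * n / p)) * morreyNorm p q f := by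
  have hp : (0:ℝ) < p := lt_of_lt_of_le (lt_trans one_pos hq) hqp
  set m : Fin n → ℤ := fun i => ⌊(2:ℝ) ^ j * x i⌋ with hm
  set c : ℝ≥0∞ := ENNReal.ofReal ((2:ℝ) ^ (((j:ℝ) * n) / 2)) with hc
  set V := volume (dyadicCube n j m) with hVdef
  set M := morreyNorm p q f with hM
  set I := ∫⁻ y in dyadicCube n j m, (‖f y‖₊ : ℝ≥0∞) ^ q with hI
  have hv : (0:ℝ) < (2:ℝ) ^ (-(j:ℝ) * n) := Real.rpow_pos_of_pos (by norm_num) _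
  have hVv : V = ENNReal.ofReal ((2:ℝ) ^ (-(j:ℝ) * n)) := volume_dyadicCube j m
  rw [haarLayer_eq_single]
  calc ENNReal.ofReal |haarCoeff f ε j m * haarFn ε j m x|
      = ENNReal.ofReal |haarCoeff f ε j m| * ENNReal.ofReal |haarFn ε j m x| := by
        rw [abs_mul, ENNReal.ofReal_mul (abs_nonneg _)]
    _ ≤ (c * ∫⁻ y in dyadicCube n j m, (‖f y‖₊ : ℝ≥0∞)) * c :=
        mul_le_mul' (haarCoeff_abs_le f ε j m)
          (ENNReal.ofReal_le_ofReal (abs_haarFn_le ε j m x))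
    _ ≤ (c * (I ^ (1/q) * V ^ (1 - 1/q))) * c := by
        gcongr
        exact holder_cube f hf hq j m
    _ ≤ (c * ((V ^ (1/q - 1/p) * M) * V ^ (1 - 1/q))) * c := by
        gcongr
        exact morrey_cube f p q j m
    _ = (c * c * (V ^ (1/q - 1/p) * V ^ (1 - 1/q))) * M := by ring
    _ = ENNReal.ofReal ((2:ℝ) ^ ((j:ℝ) * n / p)) * M := by
        congr 1
        rw [hVv, ENNReal.ofReal_rpow_of_pos hv, ENNReal.ofReal_rpow_of_pos hv, hc]
        rw [← ENNReal.ofReal_mul (Real.rpow_nonneg hv.le _),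
          ← ENNReal.ofReal_mul (Real.rpow_nonneg (by norm_num) _),
          ← ENNReal.ofReal_mul (by positivity)]
        congr 1
        rw [← Real.rpow_mul (by norm_num : (0:ℝ) ≤ 2),
          ← Real.rpow_mul (by norm_num : (0:ℝ) ≤ 2),
          ← Real.rpow_add (by norm_num : (0:ℝ) < 2),
          ← Real.rpow_add (by norm_num : (0:ℝ) < 2),
          ← Real.rpow_add (by norm_num : (0:ℝ) < 2)]
        congr 1
        have hq0 : q ≠ 0 := by positivity
        field_simp
        ring

lemma weightedLayer_eq (α : ℝ) (f : (Fin n → ℝ) → ℝ) (ε : Fin n → ZMod 2) (j : ℤ)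
    (x : Fin n → ℝ) (hn : 0 < n) :
    weightedLayer α f ε j x = (2:ℝ) ^ (-(j:ℝ) * α) * haarLayer f ε j x := by
  have hv : (0:ℝ) < (2:ℝ) ^ (-(j:ℝ) * n) := Real.rpow_pos_of_pos (by norm_num) _
  unfold weightedLayer haarLayer
  have hterm : ∀ m : Fin n → ℤ, (volume (dyadicCube n j m)).toReal ^ (α / (n:ℝ)) =
      (2:ℝ) ^ (-(j:ℝ) * α) := by
    intro m
    rw [volume_dyadicCube j m, ENNReal.toReal_ofReal hv.le,
      ← Real.rpow_mul (by norm_num : (0:ℝ) ≤ 2)]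
    congr 1
    have : (n:ℝ) ≠ 0 := Nat.cast_ne_zero.2 hn.ne'
    field_simp
  simp_rw [hterm]
  exact tsum_mul_left

end Aux3
section Aux4

lemma geom_half_sum {r : ℝ} (hr0 : 0 ≤ r) (hr1 : r < 1) {K : ℝ} (hK : 0 ≤ K)
    {u : ℕ → ℝ≥0∞} (hu : ∀ k, u k ≤ ENNReal.ofReal (K * r ^ k)) :
    ∑' k : ℕ, u k ≤ ENNReal.ofReal K * ENNReal.ofReal ((1 - r)⁻¹) := by
  calc ∑' k : ℕ, u k
      ≤ ∑' k : ℕ, ENNReal.ofReal K * (ENNReal.ofReal r) ^ k := by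
        apply ENNReal.tsum_le_tsum
        intro k
        refine le_trans (hu k) ?_
        rw [ENNReal.ofReal_mul hK, ENNReal.ofReal_pow hr0]
    _ = ENNReal.ofReal K * (1 - ENNReal.ofReal r)⁻¹ := by
        rw [ENNReal.tsum_mul_left, ENNReal.tsum_geometric]
    _ = ENNReal.ofReal K * ENNReal.ofReal ((1 - r)⁻¹) := by
        congr 1
        rw [← ENNReal.ofReal_one, ← ENNReal.ofReal_sub _ hr0,
          ENNReal.ofReal_inv_of_pos (by linarith)]

lemma tsum_min_geom {a b S M : ℝ} (ha : 0 < a) (hb : 0 < b) (hS : 0 < S) (hM : 0 < M) :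
    (∑' j : ℤ, ENNReal.ofReal (min ((2:ℝ) ^ (-(j:ℝ) * a) * S) ((2:ℝ) ^ ((j:ℝ) * b) * M))) ≤
      ENNReal.ofReal ((1 - (2:ℝ) ^ (-a))⁻¹ + (1 - (2:ℝ) ^ (-b))⁻¹) *
        (ENNReal.ofReal (M ^ (a/(a+b))) * ENNReal.ofReal (S ^ (b/(a+b)))) := by
  have hab : (0:ℝ) < a + b := by linarith
  set θ : ℝ := Real.logb 2 (S/M) / (a+b) with hθ
  set j₀ : ℤ := ⌈θ⌉ with hj₀
  set K : ℝ := M ^ (a/(a+b)) * S ^ (b/(a+b)) with hK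
  have hKpos : 0 < K := mul_pos (Real.rpow_pos_of_pos hM _) (Real.rpow_pos_of_pos hS _)
  have hlogb : (2:ℝ) ^ (θ * (a+b)) = S / M := by
    rw [hθ, div_mul_cancel₀ _ hab.ne']
    exact Real.rpow_logb two_pos (by norm_num) (div_pos hS hM)
  have hcb : b/(a+b) = 1 - a/(a+b) := by field_simp; ring
  have hca : a/(a+b) = 1 - b/(a+b) := by field_simp; ring
  have e1 : (2:ℝ) ^ (-(θ * a)) * S = K := by
    have h2 : (2:ℝ) ^ (-(θ * a)) = (S/M) ^ (-(a/(a+b))) := by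
      rw [← hlogb, ← Real.rpow_mul (by norm_num : (0:ℝ) ≤ 2)]
      congr 1
      field_simp
    rw [h2, Real.rpow_neg (div_nonneg hS.le hM.le), Real.div_rpow hS.le hM.le, inv_div,
      hK, hcb, Real.rpow_sub hS, Real.rpow_one]
    have hSc : (0:ℝ) < S ^ (a/(a+b)) := Real.rpow_pos_of_pos hS _
    field_simp
  have e2 : (2:ℝ) ^ (θ * b) * M = K := by
    have h2 : (2:ℝ) ^ (θ * b) = (S/M) ^ (b/(a+b)) := by
      rw [← hlogb, ← Real.rpow_mul (by norm_num : (0:ℝ) ≤ 2)]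
      congr 1
      field_simp
    rw [h2, Real.div_rpow hS.le hM.le, hK, hca, Real.rpow_sub hM, Real.rpow_one]
    have hMc : (0:ℝ) < M ^ (b/(a+b)) := Real.rpow_pos_of_pos hM _
    field_simp
  set g : ℤ → ℝ≥0∞ := fun j =>
    ENNReal.ofReal (min ((2:ℝ) ^ (-(j:ℝ) * a) * S) ((2:ℝ) ^ ((j:ℝ) * b) * M)) with hg
  have hshift : ∑' j : ℤ, g j = ∑' j : ℤ, g (j + j₀) :=
    ((Equiv.addRight j₀).tsum_eq g).symm
  have hsplit : ∑' j : ℤ, g (j + j₀) =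
      (∑' k : ℕ, g ((k:ℤ) + j₀)) + ∑' k : ℕ, g (-((k:ℤ) + 1) + j₀) :=
    tsum_of_nat_of_neg_add_one ENNReal.summable ENNReal.summable
  have hra : (2:ℝ) ^ (-a) < 1 :=
    Real.rpow_lt_one_of_one_lt_of_neg (by norm_num) (by linarith)
  have hrb : (2:ℝ) ^ (-b) < 1 :=
    Real.rpow_lt_one_of_one_lt_of_neg (by norm_num) (by linarith)
  have hra0 : (0:ℝ) ≤ (2:ℝ) ^ (-a) := (Real.rpow_pos_of_pos two_pos _).le
  have hrb0 : (0:ℝ) ≤ (2:ℝ) ^ (-b) := (Real.rpow_pos_of_pos two_pos _).le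
  have key1 : ∀ k : ℕ, g ((k:ℤ) + j₀) ≤ ENNReal.ofReal (K * ((2:ℝ) ^ (-a)) ^ k) := by
    intro k
    apply ENNReal.ofReal_le_ofReal
    refine le_trans (min_le_left _ _) ?_
    push_cast
    have hpk : ((2:ℝ) ^ (-a:ℝ)) ^ (k:ℕ) = (2:ℝ) ^ (-(a * (k:ℝ))) := by
      rw [← Real.rpow_natCast ((2:ℝ) ^ (-a:ℝ)) k,
        ← Real.rpow_mul (by norm_num : (0:ℝ) ≤ 2)]
      congr 1; ring
    have hsplit2 : (2:ℝ) ^ (-((k:ℝ) + (j₀:ℝ)) * a) =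
        (2:ℝ) ^ (-((j₀:ℝ) * a)) * (2:ℝ) ^ (-(a * (k:ℝ))) := by
      rw [← Real.rpow_add (by norm_num : (0:ℝ) < 2)]
      congr 1; ring
    have hmono : (2:ℝ) ^ (-((j₀:ℝ) * a)) ≤ (2:ℝ) ^ (-(θ * a)) := by
      rw [Real.rpow_le_rpow_left_iff (by norm_num : (1:ℝ) < 2)]
      nlinarith [Int.le_ceil θ]
    have h2k : (0:ℝ) < (2:ℝ) ^ (-(a * (k:ℝ))) := Real.rpow_pos_of_pos two_pos _
    rw [hpk, hsplit2, ← e1]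
    nlinarith [mul_le_mul_of_nonneg_right hmono (mul_pos hS h2k).le]
  have key2 : ∀ k : ℕ, g (-((k:ℤ) + 1) + j₀) ≤ ENNReal.ofReal (K * ((2:ℝ) ^ (-b)) ^ k) := by
    intro k
    apply ENNReal.ofReal_le_ofReal
    refine le_trans (min_le_right _ _) ?_
    push_cast
    have hpk : ((2:ℝ) ^ (-b:ℝ)) ^ (k:ℕ) = (2:ℝ) ^ (-(b * (k:ℝ))) := by
      rw [← Real.rpow_natCast ((2:ℝ) ^ (-b:ℝ)) k,
        ← Real.rpow_mul (by norm_num : (0:ℝ) ≤ 2)]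
      congr 1; ring
    have hsplit2 : (2:ℝ) ^ ((-((k:ℝ) + 1) + (j₀:ℝ)) * b) =
        (2:ℝ) ^ (((j₀:ℝ) - 1) * b) * (2:ℝ) ^ (-(b * (k:ℝ))) := by
      rw [← Real.rpow_add (by norm_num : (0:ℝ) < 2)]
      congr 1; ring
    have hmono : (2:ℝ) ^ (((j₀:ℝ) - 1) * b) ≤ (2:ℝ) ^ (θ * b) := by
      rw [Real.rpow_le_rpow_left_iff (by norm_num : (1:ℝ) < 2)]
      nlinarith [Int.ceil_lt_add_one θ]
    have h2k : (0:ℝ) < (2:ℝ) ^ (-(b * (k:ℝ))) := Real.rpow_pos_of_pos two_pos _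
    rw [hpk, hsplit2, ← e2]
    nlinarith [mul_le_mul_of_nonneg_right hmono (mul_pos hM h2k).le]
  have c1pos : (0:ℝ) ≤ (1 - (2:ℝ) ^ (-a))⁻¹ := by
    apply inv_nonneg.2; linarith
  calc ∑' j : ℤ, g j
      = (∑' k : ℕ, g ((k:ℤ) + j₀)) + ∑' k : ℕ, g (-((k:ℤ) + 1) + j₀) := by
        rw [hshift, hsplit]
    _ ≤ ENNReal.ofReal K * ENNReal.ofReal ((1 - (2:ℝ) ^ (-a))⁻¹) +
        ENNReal.ofReal K * ENNReal.ofReal ((1 - (2:ℝ) ^ (-b))⁻¹) :=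
        add_le_add (geom_half_sum hra0 hra hKpos.le key1)
          (geom_half_sum hrb0 hrb hKpos.le key2)
    _ = ENNReal.ofReal ((1 - (2:ℝ) ^ (-a))⁻¹ + (1 - (2:ℝ) ^ (-b))⁻¹) *
        (ENNReal.ofReal (M ^ (a/(a+b))) * ENNReal.ofReal (S ^ (b/(a+b)))) := by
        rw [← mul_add, ← ENNReal.ofReal_add c1pos (by apply inv_nonneg.2; linarith),
          hK, ENNReal.ofReal_mul (Real.rpow_pos_of_pos hM _).le]
        ring

end Aux4

/-- pointwise estimate in the proof of Proposition 3.2: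
`Σ_j |Σ_{Q∈𝒟_j}|Q|^{α/n}⟨f,h^ε_Q⟩h^ε_Q(x)|
  ≤ C ‖f‖_{M^p_q}^{1−p/s} (sup_l |Σ_{Q∈𝒟_l}⟨f,h^ε_Q⟩h^ε_Q(x)|)^{p/s}`. -/
theorem weightedLayer_pointwise_estimate (n : ℕ) (hn : 0 < n) (α p q s t : ℝ)
    (hα0 : 0 < α) (hαn : α < n) (hq : 1 < q) (hqp : q ≤ p)
    (ht : 1 < t) (hts : t ≤ s) (hps : 1 / s = 1 / p - α / n) (hst : t / s = q / p) :
    ∃ C : ℝ, 0 < C ∧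
      ∀ (f : (Fin n → ℝ) → ℝ) (ε : Fin n → ZMod 2), MemMorrey p q f → ε ≠ 0 →
        ∀ x : Fin n → ℝ,
          ∑' j : ℤ, ENNReal.ofReal |weightedLayer α f ε j x|
            ≤ ENNReal.ofReal C * morreyNorm p q f ^ (1 - p / s) *
                (⨆ l : ℤ, ENNReal.ofReal |haarLayer f ε l x|) ^ (p / s) := by
  have hp : (0:ℝ) < p := lt_of_lt_of_le (lt_trans one_pos hq) hqp
  have hs : (0:ℝ) < s := lt_of_lt_of_le (lt_trans one_pos ht) hts
  have hn' : (0:ℝ) < n := Nat.cast_pos.2 hn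
  have hb : (0:ℝ) < n/s := div_pos hn' hs
  have hps' : (n:ℝ)/s = (n:ℝ)/p - α := by
    have h3 : (n:ℝ) * (α/n) = α := by field_simp
    calc (n:ℝ)/s = n * (1/s) := by ring
      _ = n * (1/p - α/n) := by rw [hps]
      _ = n/p - α := by rw [mul_sub, h3]; ring
  have habs : α + (n:ℝ)/s = n/p := by linarith
  have hpss : p < s := by
    by_contra h
    push_neg at h
    have h1 : 1/p ≤ 1/s := one_div_le_one_div_of_le hs h
    have h2 : (0:ℝ) < α/n := div_pos hα0 hn'
    rw [hps] at h1
    linarith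
  have hpsos : (0:ℝ) < p/s := div_pos hp hs
  have hpsls : p/s < 1 := (div_lt_one hs).2 hpss
  have hexp2 : ((n:ℝ)/s) / (α + n/s) = p/s := by
    rw [habs]
    field_simp
  have hexp1 : α / (α + (n:ℝ)/s) = 1 - p/s := by
    have h1 : α / (α + (n:ℝ)/s) + ((n:ℝ)/s) / (α + n/s) = 1 := by
      rw [← add_div, div_self (by rw [habs]; positivity)]
    linarith [hexp2]
  have hra : (2:ℝ) ^ (-α) < 1 :=
    Real.rpow_lt_one_of_one_lt_of_neg (by norm_num) (by linarith)
  have hrb : (2:ℝ) ^ (-((n:ℝ)/s)) < 1 :=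
    Real.rpow_lt_one_of_one_lt_of_neg (by norm_num) (by linarith)
  have hc1 : (0:ℝ) < (1 - (2:ℝ) ^ (-α))⁻¹ := inv_pos.2 (by linarith)
  have hc2 : (0:ℝ) < (1 - (2:ℝ) ^ (-((n:ℝ)/s)))⁻¹ := inv_pos.2 (by linarith)
  refine ⟨(1 - (2:ℝ) ^ (-α))⁻¹ + (1 - (2:ℝ) ^ (-((n:ℝ)/s)))⁻¹,
    by linarith, ?_⟩
  intro f ε hfm hε x
  set M_E := morreyNorm p q f with hME
  set S_E := ⨆ l : ℤ, ENNReal.ofReal |haarLayer f ε l x| with hSE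
  have hlayerM : ∀ j : ℤ, ENNReal.ofReal |haarLayer f ε j x| ≤
      ENNReal.ofReal ((2:ℝ) ^ ((j:ℝ) * n / p)) * M_E :=
    fun j => layer_abs_le f hfm.1 hq hqp ε j x
  have hlayerS : ∀ j : ℤ, ENNReal.ofReal |haarLayer f ε j x| ≤ S_E :=
    fun j => le_iSup (fun l => ENNReal.ofReal |haarLayer f ε l x|) j
  have hwl : ∀ j : ℤ, |weightedLayer α f ε j x| =
      (2:ℝ) ^ (-(j:ℝ) * α) * |haarLayer f ε j x| := by
    intro j
    rw [weightedLayer_eq α f ε j x hn, abs_mul,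
      abs_of_pos (Real.rpow_pos_of_pos two_pos _)]
  rcases eq_or_ne M_E 0 with hM0 | hM0
  · have hz : ∀ j : ℤ, haarLayer f ε j x = 0 := by
      intro j
      have := hlayerM j
      rw [hM0, mul_zero, le_zero_iff, ENNReal.ofReal_eq_zero] at this
      exact abs_eq_zero.1 (le_antisymm this (abs_nonneg _))
    have : ∀ j : ℤ, ENNReal.ofReal |weightedLayer α f ε j x| = 0 := by
      intro j; rw [hwl j, hz j]; simp
    simp only [this, tsum_zero]
    exact zero_le
  rcases eq_or_ne S_E 0 with hS0 | hS0
  · have hz : ∀ j : ℤ, haarLayer f ε j x = 0 := by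
      intro j
      have := hlayerS j
      rw [hS0, le_zero_iff, ENNReal.ofReal_eq_zero] at this
      exact abs_eq_zero.1 (le_antisymm this (abs_nonneg _))
    have : ∀ j : ℤ, ENNReal.ofReal |weightedLayer α f ε j x| = 0 := by
      intro j; rw [hwl j, hz j]; simp
    simp only [this, tsum_zero]
    exact zero_le
  rcases eq_or_ne S_E ⊤ with hSt | hSt
  · rw [hSt, ENNReal.top_rpow_of_pos hpsos, ENNReal.mul_top]
    · exact le_top
    · apply mul_ne_zero
      · simp only [ne_eq, ENNReal.ofReal_eq_zero, not_le]
        linarith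
      · rw [ne_eq, ENNReal.rpow_eq_zero_iff]
        push_neg
        constructor
        · intro h; exact absurd h hM0
        · intro h; linarith
  · -- main case
    have hMt : M_E ≠ ⊤ := hfm.2
    set Sr := S_E.toReal with hSr
    set Mr := M_E.toReal with hMr
    have hSrpos : 0 < Sr := ENNReal.toReal_pos hS0 hSt
    have hMrpos : 0 < Mr := ENNReal.toReal_pos hM0 hMt
    have hSEr : S_E = ENNReal.ofReal Sr := (ENNReal.ofReal_toReal hSt).symm
    have hMEr : M_E = ENNReal.ofReal Mr := (ENNReal.ofReal_toReal hMt).symm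
    have hterm : ∀ j : ℤ, ENNReal.ofReal |weightedLayer α f ε j x| ≤
        ENNReal.ofReal (min ((2:ℝ) ^ (-(j:ℝ) * α) * Sr) ((2:ℝ) ^ ((j:ℝ) * (n/s)) * Mr)) := by
      intro j
      apply ENNReal.ofReal_le_ofReal
      rw [hwl j]
      have hLS : |haarLayer f ε j x| ≤ Sr := by
        have := hlayerS j
        rw [hSEr] at this
        exact (ENNReal.ofReal_le_ofReal_iff hSrpos.le).1 this
      have hLM : |haarLayer f ε j x| ≤ (2:ℝ) ^ ((j:ℝ) * n / p) * Mr := by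
        have := hlayerM j
        rw [hMEr, ← ENNReal.ofReal_mul (Real.rpow_pos_of_pos two_pos _).le] at this
        exact (ENNReal.ofReal_le_ofReal_iff (by positivity)).1 this
      apply le_min
      · exact mul_le_mul_of_nonneg_left hLS (Real.rpow_pos_of_pos two_pos _).le
      · calc (2:ℝ) ^ (-(j:ℝ) * α) * |haarLayer f ε j x|
            ≤ (2:ℝ) ^ (-(j:ℝ) * α) * ((2:ℝ) ^ ((j:ℝ) * n / p) * Mr) :=
              mul_le_mul_of_nonneg_left hLM (Real.rpow_pos_of_pos two_pos _).le
          _ = (2:ℝ) ^ ((j:ℝ) * (n/s)) * Mr := by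
              rw [← mul_assoc, ← Real.rpow_add two_pos]
              congr 2
              rw [hps']
              ring
    calc ∑' j : ℤ, ENNReal.ofReal |weightedLayer α f ε j x|
        ≤ ∑' j : ℤ, ENNReal.ofReal
            (min ((2:ℝ) ^ (-(j:ℝ) * α) * Sr) ((2:ℝ) ^ ((j:ℝ) * (n/s)) * Mr)) :=
          ENNReal.tsum_le_tsum hterm
      _ ≤ ENNReal.ofReal ((1 - (2:ℝ) ^ (-α))⁻¹ + (1 - (2:ℝ) ^ (-((n:ℝ)/s)))⁻¹) *
            (ENNReal.ofReal (Mr ^ (α/(α + n/s))) * ENNReal.ofReal (Sr ^ ((n/s)/(α + n/s)))) :=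
          tsum_min_geom hα0 hb hSrpos hMrpos
      _ = ENNReal.ofReal ((1 - (2:ℝ) ^ (-α))⁻¹ + (1 - (2:ℝ) ^ (-((n:ℝ)/s)))⁻¹) *
            M_E ^ (1 - p/s) * S_E ^ (p/s) := by
          rw [hexp1, hexp2, hSEr, hMEr,
            ENNReal.ofReal_rpow_of_pos hMrpos, ENNReal.ofReal_rpow_of_pos hSrpos,
            mul_assoc]

end
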